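/- Let I be a compact interval, f : I → I a continuous map, and P a periodic orbit of f (the forward orbit of a periodic point). If α(x) ∩ P ≠ ∅ for some point x ∈ I, then P ⊆ sα(x). -/

import Mathlib

open Filter Topology

/-- `g` is a backward orbit branch for `f`: `f (g (n+1)) = g n` for all `n`. -/
def IsBackwardBranch {X : Type*} (f : X → X) (g : ℕ → X) : Prop :=
  ∀ n : ℕ, f (g (n + 1)) = g n

/-- `g` is a preimage sequence of `x` for `f`: `f^[n] (g n) = x` for all `n`. -/
def IsPreimageSeq {X : Type*} (f : X → X) (x : X) (g : ℕ → X) : Prop :=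
  ∀ n : ℕ, f^[n] (g n) = x

/-- The set of limit points of a sequence `g`. -/
def limitPts {X : Type*} [TopologicalSpace X] (g : ℕ → X) : Set X :=
  {y | ∃ φ : ℕ → ℕ, StrictMono φ ∧ Filter.Tendsto (fun i => g (φ i)) Filter.atTop (nhds y)}

/-- The ω-limit set of a point `x`. -/
def omegaSet {X : Type*} [TopologicalSpace X] (f : X → X) (x : X) : Set X :=
  limitPts fun n => f^[n] x

/-- The α-limit set of a point `x`: limit points of preimage sequences of `x`. -/
def alphaSet {X : Type*} [TopologicalSpace X] (f : X → X) (x : X) : Set X :=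
  {y | ∃ g : ℕ → X, IsPreimageSeq f x g ∧ y ∈ limitPts g}

/-- The special α-limit set of a point `x`: limit points of backward orbit branches of `x`. -/
def sAlphaSet {X : Type*} [TopologicalSpace X] (f : X → X) (x : X) : Set X :=
  {y | ∃ g : ℕ → X, g 0 = x ∧ IsBackwardBranch f g ∧ y ∈ limitPts g}

/-- `A(f)`: the union of the α-limit sets of all points. -/
def bigA {X : Type*} [TopologicalSpace X] (f : X → X) : Set X := ⋃ x, alphaSet f x

/-- `SA(f)`: the union of the special α-limit sets of all points. -/
def bigSA {X : Type*} [TopologicalSpace X] (f : X → X) : Set X := ⋃ x, sAlphaSet f x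

/-- `ω(f)`: the union of the ω-limit sets of all points. -/
def omegaUnion {X : Type*} [TopologicalSpace X] (f : X → X) : Set X := ⋃ x, omegaSet f x

/-- The set of recurrent points of `f`. -/
def recPts {X : Type*} [TopologicalSpace X] (f : X → X) : Set X :=
  {x | ∀ U ∈ nhds x, ∃ n : ℕ, 1 ≤ n ∧ f^[n] x ∈ U}

/-- The set of non-wandering points of `f`. -/
def nwPts {X : Type*} [TopologicalSpace X] (f : X → X) : Set X :=
  {x | ∀ U ∈ nhds x, ∃ n : ℕ, 1 ≤ n ∧ (f^[n] '' U ∩ U).Nonempty}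

/-- The set of periodic points of `f`. -/
def perPts {X : Type*} (f : X → X) : Set X :=
  {p | ∃ k : ℕ, 1 ≤ k ∧ f^[k] p = p}


section SAlphaAux

/-- A sequence of limit-point sets: iterate shift along a backward branch. -/
theorem myBranchIterShift {X : Type*} (f : X → X) (h : ℕ → X)
    (hb : ∀ n, f (h (n + 1)) = h n) (j : ℕ) : ∀ nn, f^[j] (h (nn + j)) = h nn := by
  induction j with
  | zero => intro nn; simp
  | succ j ih =>
      intro nn
      have : nn + (j + 1) = (nn + j) + 1 := by omega
      rw [this, Function.iterate_succ_apply, hb (nn + j), ih]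

theorem myLimitShift {X : Type*} [TopologicalSpace X] (f : X → X) (hf : Continuous f)
    (h : ℕ → X) (hb : ∀ n, f (h (n + 1)) = h n) (y : X) (hy : y ∈ limitPts h) (j : ℕ) :
    f^[j] y ∈ limitPts h := by
  obtain ⟨φ, hφ, hlim⟩ := hy
  refine ⟨fun i => φ (i + j) - j, ?_, ?_⟩
  · intro i1 i2 h12
    have hj1 : j ≤ φ (i1 + j) := le_trans (by omega) hφ.le_apply
    have := hφ (show i1 + j < i2 + j by omega)
    show φ (i1 + j) - j < φ (i2 + j) - j
    omega
  · have hval : ∀ i, h (φ (i + j) - j) = f^[j] (h (φ (i + j))) := by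
      intro i
      have hj1 : j ≤ φ (i + j) := le_trans (by omega) hφ.le_apply
      conv_rhs => rw [show φ (i + j) = (φ (i + j) - j) + j by omega]
      rw [myBranchIterShift f h hb j]
    have h2 : Filter.Tendsto (fun i => f^[j] (h (φ (i + j)))) atTop (nhds (f^[j] y)) := by
      exact ((hf.iterate j).tendsto y).comp (hlim.comp (tendsto_add_atTop_nat j))
    exact h2.congr (fun i => (hval i).symm)

/-- The branch builder: from a "pullback pool" `T` we construct an infinite backward
branch of `x` accumulating at `Q`. -/
theorem myBuilder (g : ℝ → ℝ) (x Q : ℝ) (T : Set ℝ) (hxT : x ∈ T)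
    (H : ∀ e ∈ T, ∀ ε : ℝ, 0 < ε →
      ∃ m w, 1 ≤ m ∧ w ∈ T ∧ g^[m] w = e ∧ |w - Q| < ε) :
    ∃ h : ℕ → ℝ, h 0 = x ∧ (∀ n, g (h (n + 1)) = h n) ∧
      ∃ φ : ℕ → ℕ, StrictMono φ ∧ Tendsto (fun i => h (φ i)) atTop (nhds Q) := by
  classical
  have key : ∀ s : ℝ × ℕ × ℕ, s.1 ∈ T → ∃ s' : ℝ × ℕ × ℕ,
      s'.1 ∈ T ∧ s'.2.2 = s.2.2 + 1 ∧ s.2.1 < s'.2.1 ∧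
      g^[s'.2.1 - s.2.1] s'.1 = s.1 ∧ |s'.1 - Q| < 1 / (s.2.2 + 1) := by
    rintro ⟨e, N, r⟩ he
    obtain ⟨m, w, hm, hwT, hge, hdist⟩ := H e he (1 / (r + 1)) (by positivity)
    refine ⟨⟨w, N + m, r + 1⟩, hwT, rfl, by show N < N + m; omega, ?_, hdist⟩
    simpa using hge
  let step : ℝ × ℕ × ℕ → ℝ × ℕ × ℕ := fun s => if h : s.1 ∈ T then Classical.choose (key s h) else s
  let seq : ℕ → ℝ × ℕ × ℕ := fun r => step^[r] (x, 0, 0)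
  have hsucc : ∀ r, seq (r + 1) = step (seq r) := fun r => Function.iterate_succ_apply' step r _
  have hmemT : ∀ r, (seq r).1 ∈ T := by
    intro r; induction r with
    | zero => exact hxT
    | succ r ih =>
        rw [hsucc r]
        show (if h : (seq r).1 ∈ T then Classical.choose (key (seq r) h) else (seq r)).1 ∈ T
        rw [dif_pos ih]
        exact (Classical.choose_spec (key (seq r) ih)).1
  have hstep : ∀ r, seq (r + 1) = Classical.choose (key (seq r) (hmemT r)) := by
    intro r; rw [hsucc r]
    show (if h : (seq r).1 ∈ T then Classical.choose (key (seq r) h) else (seq r)) = _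
    rw [dif_pos (hmemT r)]
  have hspec : ∀ r, (seq (r+1)).1 ∈ T ∧ (seq (r+1)).2.2 = (seq r).2.2 + 1 ∧
      (seq r).2.1 < (seq (r+1)).2.1 ∧
      g^[(seq (r+1)).2.1 - (seq r).2.1] (seq (r+1)).1 = (seq r).1 ∧
      |(seq (r+1)).1 - Q| < 1 / ((seq r).2.2 + 1) := by
    intro r; rw [hstep r]; exact Classical.choose_spec (key (seq r) (hmemT r))
  have hstage : ∀ r, (seq r).2.2 = r := by
    intro r; induction r with
    | zero => rfl
    | succ r ih => rw [(hspec r).2.1, ih]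
  set E : ℕ → ℝ := fun r => (seq r).1 with hE
  set N : ℕ → ℕ := fun r => (seq r).2.1 with hN
  have hN0 : N 0 = 0 := rfl
  have hNlt : ∀ r, N r < N (r + 1) := fun r => (hspec r).2.2.1
  have hchain1 : ∀ r, g^[N (r+1) - N r] (E (r+1)) = E r := fun r => (hspec r).2.2.2.1
  have hdist : ∀ r, |E (r + 1) - Q| < 1 / (r + 1) := by
    intro r
    have := (hspec r).2.2.2.2
    rwa [hstage r] at this
  have hNmono : StrictMono N := strictMono_nat_of_lt_succ hNlt
  have hchain2 : ∀ s r, s ≤ r → g^[N r - N s] (E r) = E s := by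
    intro s r hsr
    induction r, hsr using Nat.le_induction with
    | base => simp
    | succ r hsr ih =>
        have h1 : N s ≤ N r := hNmono.monotone hsr
        have h2 : N r < N (r + 1) := hNlt r
        rw [show N (r+1) - N s = (N r - N s) + (N (r+1) - N r) by omega,
          Function.iterate_add_apply, hchain1 r, ih]
  have hex : ∀ n : ℕ, ∃ r, n ≤ N (r + 1) := fun n =>
    ⟨n, le_trans (Nat.le_succ n) hNmono.le_apply⟩
  let ρ : ℕ → ℕ := fun n => Nat.find (hex n)
  let h : ℕ → ℝ := fun n => g^[N (ρ n + 1) - n] (E (ρ n + 1))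
  have hρspec : ∀ n, n ≤ N (ρ n + 1) := fun n => Nat.find_spec (hex n)
  have hρmin : ∀ n r, r < ρ n → N (r + 1) < n := by
    intro n r hr
    have := Nat.find_min (hex n) hr
    omega
  have hhN : ∀ i, h (N (i + 1)) = E (i + 1) := by
    intro i
    have h1 : ρ (N (i + 1)) ≤ i := Nat.find_le (le_refl _)
    have h2 : ¬ ρ (N (i + 1)) < i := by
      intro hc
      have h3 := hNmono (show ρ (N (i+1)) + 1 < i + 1 by omega)
      have h4 := hρspec (N (i + 1))
      omega
    have heq : ρ (N (i + 1)) = i := by omega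
    show g^[N (ρ (N (i+1)) + 1) - N (i+1)] (E (ρ (N (i+1)) + 1)) = E (i+1)
    rw [heq]; simp
  refine ⟨h, ?_, ?_, fun i => N (i + 1), fun i j hij => hNmono (by omega), ?_⟩
  · show g^[N (ρ 0 + 1) - 0] (E (ρ 0 + 1)) = x
    have hρ0 : ρ 0 = 0 := Nat.eq_zero_of_le_zero (Nat.find_le (by omega))
    rw [hρ0]
    have := hchain2 0 1 (by omega)
    rw [hN0] at this
    exact this
  · intro n
    have hspecR : n + 1 ≤ N (ρ (n+1) + 1) := hρspec (n + 1)
    have e1 : g (h (n + 1)) = g^[N (ρ (n+1) + 1) - n] (E (ρ (n+1) + 1)) := by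
      show g (g^[N (ρ (n+1) + 1) - (n+1)] (E (ρ (n+1) + 1))) = _
      rw [← Function.iterate_succ_apply' g]
      congr 1
      omega
    have hle : ρ n ≤ ρ (n + 1) := Nat.find_mono (fun r hr => by omega)
    rcases eq_or_lt_of_le hle with heq | hlt
    · rw [e1]; show _ = g^[N (ρ n + 1) - n] (E (ρ n + 1)); rw [heq]
    · have h5 := hρmin (n + 1) _ hlt
      have h6 := hρspec n
      have hn_eq : n = N (ρ n + 1) := by omega
      have h_n : h n = E (ρ n + 1) := by
        show g^[N (ρ n + 1) - n] (E (ρ n + 1)) = _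
        rw [← hn_eq]; simp
      rw [e1, h_n]
      have hc := hchain2 (ρ n + 1) (ρ (n+1) + 1) (by omega)
      rw [← hn_eq] at hc
      exact hc
  · rw [Metric.tendsto_atTop]
    intro ε hε
    obtain ⟨M, hM⟩ := exists_nat_one_div_lt hε
    refine ⟨M, fun i hi => ?_⟩
    rw [hhN i, Real.dist_eq]
    refine lt_of_lt_of_le (hdist i) (le_trans ?_ hM.le)
    apply one_div_le_one_div_of_le
    · positivity
    · exact_mod_cast by omega

theorem myCore (g : ℝ → ℝ) (hg : Continuous g) (Q x : ℝ) (hQ : g Q = Q)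
    (z : ℕ → ℝ) (ns : ℕ → ℕ) (hn : ∀ i, 1 ≤ ns i) (hzx : ∀ i, g^[ns i] (z i) = x)
    (hzlt : ∀ i, z i < Q) (hz : Tendsto z atTop (nhds Q)) :
    ∃ T : Set ℝ, x ∈ T ∧ ∀ e ∈ T, ∀ ε : ℝ, 0 < ε →
      ∃ m w, 1 ≤ m ∧ w ∈ T ∧ g^[m] w = e ∧ |w - Q| < ε := by
  have imgOC : ∀ (m : ℕ) (s t : ℝ), Set.OrdConnected (g^[m] '' Set.Icc s t) := fun m s t =>
    ((isPreconnected_Icc).image _ ((hg.iterate m).continuousOn)).ordConnected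
  have hQim : ∀ (m : ℕ) (s t : ℝ), s ≤ Q → Q ≤ t → Q ∈ g^[m] '' Set.Icc s t := by
    intro m s t hs ht
    exact ⟨Q, ⟨hs, ht⟩, Function.iterate_fixed hQ m⟩
  by_cases hxQ : x ≤ Q
  · -- easy case: T = Icc x Q
    refine ⟨Set.Icc x Q, ⟨le_refl x, hxQ⟩, ?_⟩
    rintro e ⟨hxe, heQ⟩ ε hε
    rcases eq_or_lt_of_le heQ with heq | heQ'
    · refine ⟨1, Q, le_refl 1, ⟨hxQ, le_refl Q⟩, ?_, by simpa using hε⟩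
      simp [hQ, heq]
    · have hmax : max e (Q - ε) < Q := max_lt heQ' (by linarith)
      have hev : ∀ᶠ i in atTop, max e (Q - ε) < z i :=
        hz.eventually (eventually_gt_nhds hmax)
      obtain ⟨i, hi⟩ := hev.exists
      have hxmem : x ∈ g^[ns i] '' Set.Icc (z i) Q :=
        ⟨z i, ⟨le_refl _, (hzlt i).le⟩, hzx i⟩
      have hQmem : Q ∈ g^[ns i] '' Set.Icc (z i) Q := hQim _ _ _ (hzlt i).le (le_refl _)
      have hsub : Set.Icc x Q ⊆ g^[ns i] '' Set.Icc (z i) Q := (imgOC _ _ _).out hxmem hQmem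
      obtain ⟨w, hwIcc, hwe⟩ := hsub ⟨hxe, heQ⟩
      have h1 : e < z i := lt_of_le_of_lt (le_max_left _ _) hi
      have h2 : Q - ε < z i := lt_of_le_of_lt (le_max_right _ _) hi
      refine ⟨ns i, w, hn i, ⟨?_, hwIcc.2⟩, hwe, ?_⟩
      · exact le_trans hxe (le_trans h1.le hwIcc.1)
      · rw [abs_lt]
        constructor
        · have := hwIcc.1; linarith
        · have := hwIcc.2; linarith
  · push_neg at hxQ  -- Q < x
    by_cases hR : ∀ v : ℝ, Q < v → ∃ m, 1 ≤ m ∧ x ∈ g^[m] '' Set.Icc Q v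
    · -- right mechanism: T = Icc Q x
      refine ⟨Set.Icc Q x, ⟨hxQ.le, le_refl x⟩, ?_⟩
      rintro e ⟨hQe, hex⟩ ε hε
      set v := Q + min (ε / 2) ((x - Q) / 2) with hv
      have hQv : Q < v := by
        have h9 : (0:ℝ) < min (ε / 2) ((x - Q) / 2) := lt_min (by linarith) (by linarith)
        rw [hv]; linarith
      have hvx : v ≤ x := by
        have : min (ε / 2) ((x - Q) / 2) ≤ (x - Q) / 2 := min_le_right _ _
        simp only [hv]; linarith
      obtain ⟨m, hm1, hxm⟩ := hR v hQv
      have hQmem : Q ∈ g^[m] '' Set.Icc Q v := hQim _ _ _ (le_refl _) hQv.le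
      have hsub : Set.Icc Q x ⊆ g^[m] '' Set.Icc Q v := (imgOC _ _ _).out hQmem hxm
      obtain ⟨w, hwIcc, hwe⟩ := hsub ⟨hQe, hex⟩
      refine ⟨m, w, hm1, ⟨hwIcc.1, le_trans hwIcc.2 hvx⟩, hwe, ?_⟩
      rw [abs_lt]
      have h1 := hwIcc.1
      have h2 := hwIcc.2
      have : min (ε / 2) ((x - Q) / 2) ≤ ε / 2 := min_le_left _ _
      constructor <;> simp only [hv] at h2 <;> linarith
    · -- hard case
      push_neg at hR
      obtain ⟨v₀, hv₀Q, hv₀⟩ := hR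
      set v := min v₀ ((Q + x) / 2) with hvdef
      have hQv : Q < v := lt_min hv₀Q (by linarith)
      have hvx : v < x := lt_of_le_of_lt (min_le_right _ _) (by linarith)
      have hv : ∀ m, 1 ≤ m → x ∉ g^[m] '' Set.Icc Q v := by
        intro m hm hmem
        obtain ⟨w, hw, hwx⟩ := hmem
        exact hv₀ m hm ⟨w, ⟨hw.1, le_trans hw.2 (min_le_left _ _)⟩, hwx⟩
      -- Step A : orbits avoid [Q, v]
      have hA : ∀ i s, s ≤ ns i → g^[s] (z i) ∉ Set.Icc Q v := by
        intro i s hs hmem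
        rcases eq_or_lt_of_le hs with heq | hs'
        · rw [heq, hzx i] at hmem
          exact absurd hmem.2 (not_le.2 hvx)
        · refine hv (ns i - s) (by omega) ⟨g^[s] (z i), hmem, ?_⟩
          rw [← Function.iterate_add_apply, Nat.sub_add_cancel hs, hzx i]
      -- Step B : first crossing of Q
      have hexσ : ∀ i, ∃ s, ¬ g^[s] (z i) < Q := fun i =>
        ⟨ns i, by rw [hzx i]; exact not_lt.2 hxQ.le⟩
      set σ : ℕ → ℕ := fun i => Nat.find (hexσ i) with hσdef
      have hσpos : ∀ i, 1 ≤ σ i := by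
        intro i
        rcases Nat.eq_zero_or_pos (σ i) with h0 | h1
        · exfalso
          have := Nat.find_spec (hexσ i)
          rw [show Nat.find (hexσ i) = σ i from rfl, h0] at this
          exact this (by simpa using hzlt i)
        · exact h1
      have hσle : ∀ i, σ i ≤ ns i := fun i => Nat.find_min' (hexσ i) (by
        rw [hzx i]; exact not_lt.2 hxQ.le)
      set u : ℕ → ℝ := fun i => g^[σ i - 1] (z i) with hudef
      have hu_lt : ∀ i, u i < Q := by
        intro i
        have hrfl : Nat.find (hexσ i) = σ i := rfl
        have := Nat.find_min (hexσ i) (show σ i - 1 < Nat.find (hexσ i) by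
          have := hσpos i; omega)
        simpa using this
      have hgu_eq : ∀ i, g (u i) = g^[σ i] (z i) := by
        intro i
        show g (g^[σ i - 1] (z i)) = _
        rw [← Function.iterate_succ_apply' g]
        congr 1
        have := hσpos i; omega
      have hgu : ∀ i, v < g (u i) := by
        intro i
        have h1 : ¬ g^[σ i] (z i) < Q := Nat.find_spec (hexσ i)
        have h2 := hA i (σ i) (hσle i)
        rw [hgu_eq i]
        rcases lt_or_ge v (g^[σ i] (z i)) with h | h
        · exact h
        · exact absurd ⟨not_lt.1 h1, h⟩ h2
      have hux : ∀ i, g^[ns i - (σ i - 1)] (u i) = x := by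
        intro i
        show g^[ns i - (σ i - 1)] (g^[σ i - 1] (z i)) = x
        rw [← Function.iterate_add_apply, Nat.sub_add_cancel (by
          have := hσle i; have := hσpos i; omega), hzx i]
      -- Step C : jump points bounded away from Q
      have hC : ∃ δ, 0 < δ ∧ ∃ᶠ i in atTop, u i ≤ Q - δ := by
        by_contra hcon
        push_neg at hcon
        have hcon' : ∀ δ : ℝ, 0 < δ → ∀ᶠ i in atTop, Q - δ < u i := by
          intro δ hδ
          have := hcon δ hδ
          exact this
        have huQ : Tendsto u atTop (nhds Q) := by
          rw [Metric.tendsto_atTop]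
          intro ε hε
          obtain ⟨M, hM⟩ := (Filter.eventually_atTop.1 (hcon' ε hε))
          refine ⟨M, fun i hi => ?_⟩
          rw [Real.dist_eq, abs_lt]
          have h1 := hM i hi
          have h2 := hu_lt i
          constructor <;> linarith
        have hguQ : Tendsto (fun i => g (u i)) atTop (nhds Q) := by
          have := (hg.tendsto Q).comp huQ
          rwa [hQ] at this
        have hevv : ∀ᶠ i in atTop, g (u i) < v := hguQ.eventually (eventually_lt_nhds hQv)
        obtain ⟨i, hi⟩ := hevv.exists
        exact absurd (hgu i) (not_lt.2 hi.le)
      obtain ⟨δ, hδ, hfreq⟩ := hC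
      -- Step D : descent
      have hD : ∀ lam : ℝ, 0 < lam → lam ≤ δ →
          ∃ w₀ m₀ s₁, Q - lam < w₀ ∧ w₀ < Q ∧ 1 ≤ m₀ ∧ g^[m₀] w₀ = x ∧
            1 ≤ s₁ ∧ g^[s₁] w₀ ≤ Q - δ := by
        intro lam hl hld
        have hev : ∀ᶠ i in atTop, Q - lam < z i :=
          hz.eventually (eventually_gt_nhds (by linarith))
        obtain ⟨i, hui, hzi⟩ := (hfreq.and_eventually hev).exists
        have hexμ : ∃ s, g^[s] (z i) ≤ Q - lam := ⟨σ i - 1, by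
          show u i ≤ Q - lam; linarith⟩
        set μ := Nat.find hexμ with hμdef
        have hμspec : g^[μ] (z i) ≤ Q - lam := Nat.find_spec hexμ
        have hμpos : 1 ≤ μ := by
          rcases Nat.eq_zero_or_pos μ with h0 | h1
          · exfalso
            have := hμspec
            rw [h0] at this
            simp at this
            linarith
          · exact h1
        have hμσ : μ ≤ σ i - 1 := Nat.find_min' hexμ (by show u i ≤ Q - lam; linarith)
        refine ⟨g^[μ - 1] (z i), ns i - (μ - 1), (σ i - 1) - (μ - 1), ?_, ?_, ?_, ?_, ?_, ?_⟩
        · have hrfl : Nat.find hexμ = μ := rfl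
          have := Nat.find_min hexμ (show μ - 1 < Nat.find hexμ by omega)
          exact not_le.1 this
        · have hrfl : Nat.find (hexσ i) = σ i := rfl
          have := Nat.find_min (hexσ i) (show μ - 1 < Nat.find (hexσ i) by
            have := hσpos i; omega)
          simpa using this
        · have h1 := hσle i
          have h2 := hσpos i
          have h3 := hn i
          omega
        · rw [← Function.iterate_add_apply, Nat.sub_add_cancel (by
            have := hσle i; have := hσpos i; omega), hzx i]
        · omega
        · rw [← Function.iterate_add_apply, show (σ i - 1) - (μ - 1) + (μ - 1) = σ i - 1 by omega]
          show u i ≤ Q - δ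
          exact hui
      -- Step E : the pool
      refine ⟨insert x (Set.Icc (Q - δ) Q), Set.mem_insert _ _, ?_⟩
      intro e he ε hε
      set lam := min δ (ε / 2) with hlam
      have hlam0 : 0 < lam := lt_min hδ (by linarith)
      have hlamδ : lam ≤ δ := min_le_left _ _
      have hlamε : lam < ε := lt_of_le_of_lt (min_le_right _ _) (by linarith)
      obtain ⟨w₀, m₀, s₁, hw01, hw02, hm₀, hw0x, hs₁, hw0d⟩ := hD lam hlam0 hlamδ
      have hw₀T : w₀ ∈ insert x (Set.Icc (Q - δ) Q) :=
        Set.mem_insert_iff.2 (Or.inr ⟨by linarith, hw02.le⟩)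
      have hw₀dist : |w₀ - Q| < ε := by rw [abs_lt]; constructor <;> linarith
      rcases Set.mem_insert_iff.1 he with heq | heIcc
      · exact ⟨m₀, w₀, hm₀, hw₀T, by rw [hw0x, heq], hw₀dist⟩
      · have hw₀mem : w₀ ∈ Set.Icc (Q - lam) Q := ⟨hw01.le, hw02.le⟩
        have h1 : g^[s₁] w₀ ∈ g^[s₁] '' Set.Icc (Q - lam) Q := ⟨w₀, hw₀mem, rfl⟩
        have h2 : Q ∈ g^[s₁] '' Set.Icc (Q - lam) Q := hQim _ _ _ (by linarith) (le_refl _)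
        have hsub : Set.Icc (g^[s₁] w₀) Q ⊆ g^[s₁] '' Set.Icc (Q - lam) Q :=
          (imgOC _ _ _).out h1 h2
        have hemem : e ∈ Set.Icc (g^[s₁] w₀) Q := ⟨by linarith [heIcc.1], heIcc.2⟩
        obtain ⟨w, hwmem, hwe⟩ := hsub hemem
        refine ⟨s₁, w, hs₁, Set.mem_insert_iff.2 (Or.inr ⟨by linarith [hwmem.1], hwmem.2⟩),
          hwe, ?_⟩
        rw [abs_lt]
        have := hwmem.1
        have := hwmem.2
        constructor <;> linarith

theorem myLeftCase (g : ℝ → ℝ) (hg : Continuous g) (Q x : ℝ) (hQ : g Q = Q)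
    (z : ℕ → ℝ) (ns : ℕ → ℕ) (hn : ∀ i, 1 ≤ ns i) (hzx : ∀ i, g^[ns i] (z i) = x)
    (hzlt : ∀ i, z i < Q) (hz : Tendsto z atTop (nhds Q)) :
    ∃ h : ℕ → ℝ, h 0 = x ∧ (∀ n, g (h (n + 1)) = h n) ∧
      ∃ φ : ℕ → ℕ, StrictMono φ ∧ Tendsto (fun i => h (φ i)) atTop (nhds Q) := by
  obtain ⟨T, hxT, H⟩ := myCore g hg Q x hQ z ns hn hzx hzlt hz
  exact myBuilder g x Q T hxT H

/-- The full one-dimensional lemma: no one-sidedness assumption. -/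
theorem myRealLevel (g : ℝ → ℝ) (hg : Continuous g) (Q x : ℝ) (hQ : g Q = Q)
    (z : ℕ → ℝ) (ns : ℕ → ℕ) (hn : ∀ i, 1 ≤ ns i) (hzx : ∀ i, g^[ns i] (z i) = x)
    (hz : Tendsto z atTop (nhds Q)) :
    ∃ h : ℕ → ℝ, h 0 = x ∧ (∀ n, g (h (n + 1)) = h n) ∧
      ∃ φ : ℕ → ℕ, StrictMono φ ∧ Tendsto (fun i => h (φ i)) atTop (nhds Q) := by
  by_cases hxQ : x = Q
  · refine myBuilder g x Q {Q} (by rw [hxQ]; rfl) ?_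
    intro e he ε hε
    rw [Set.mem_singleton_iff] at he
    exact ⟨1, Q, le_refl 1, rfl, by simp [hQ, he], by simpa using hε⟩
  · have hne : ∀ i, z i ≠ Q := by
      intro i h
      exact hxQ (by rw [← hzx i, h, Function.iterate_fixed hQ])
    have hside : (∃ᶠ i in atTop, z i < Q) ∨ (∃ᶠ i in atTop, Q < z i) := by
      by_contra hcon
      rw [not_or, Filter.not_frequently, Filter.not_frequently] at hcon
      obtain ⟨i, hi1, hi2⟩ := (hcon.1.and hcon.2).exists
      push_neg at hi1 hi2
      exact hne i (le_antisymm hi2 hi1)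
    rcases hside with hleft | hright
    · obtain ⟨θ, hθ, hθlt⟩ := extraction_of_frequently_atTop hleft
      exact myLeftCase g hg Q x hQ (z ∘ θ) (ns ∘ θ) (fun j => hn (θ j))
        (fun j => hzx (θ j)) hθlt (hz.comp hθ.tendsto_atTop)
    · obtain ⟨θ, hθ, hθgt⟩ := extraction_of_frequently_atTop hright
      -- reflect through Q
      set g' : ℝ → ℝ := fun t => 2 * Q - g (2 * Q - t) with hg'def
      have hg' : Continuous g' := by
        apply Continuous.sub continuous_const
        exact hg.comp (continuous_const.sub continuous_id)
      have hg'Q : g' Q = Q := by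
        show 2 * Q - g (2 * Q - Q) = Q
        rw [show 2 * Q - Q = Q by ring, hQ]; ring
      have hiter : ∀ m t, g'^[m] t = 2 * Q - g^[m] (2 * Q - t) := by
        intro m
        induction m with
        | zero => intro t; simp
        | succ m ih =>
            intro t
            rw [Function.iterate_succ_apply', ih, Function.iterate_succ_apply']
            show 2 * Q - g (2 * Q - (2 * Q - g^[m] (2 * Q - t))) = _
            congr 2
            ring
      obtain ⟨h', h'0, h'br, φ, hφ, hφlim⟩ := myLeftCase g' hg' Q (2 * Q - x) hg'Q
        (fun j => 2 * Q - z (θ j)) (ns ∘ θ) (fun j => hn (θ j))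
        (fun j => by
          show g'^[ns (θ j)] (2 * Q - z (θ j)) = 2 * Q - x
          rw [hiter]
          have h9 : 2 * Q - (2 * Q - z (θ j)) = z (θ j) := by ring
          rw [h9, hzx (θ j)])
        (fun j => by show 2 * Q - z (θ j) < Q; have := hθgt j; linarith)
        (by
          have h1 : Tendsto (fun j => z (θ j)) atTop (nhds Q) := hz.comp hθ.tendsto_atTop
          have h2 : Tendsto (fun j => 2 * Q - z (θ j)) atTop (nhds (2 * Q - Q)) :=
            (tendsto_const_nhds.sub h1)
          simpa [show 2 * Q - Q = Q by ring] using h2)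
      refine ⟨fun n => 2 * Q - h' n, by show 2 * Q - h' 0 = x; rw [h'0]; ring, ?_, φ, hφ, ?_⟩
      · intro n
        have h4 : 2 * Q - g (2 * Q - h' (n + 1)) = h' n := h'br n
        show g (2 * Q - h' (n + 1)) = 2 * Q - h' n
        linarith
      · have h2 : Tendsto (fun i => 2 * Q - h' (φ i)) atTop (nhds (2 * Q - Q)) :=
          tendsto_const_nhds.sub hφlim
        simpa [show 2 * Q - Q = Q by ring] using h2

noncomputable def myRetr (a b : ℝ) (hab : a ≤ b) : ℝ → Set.Icc a b := fun t =>
  ⟨max a (min b t), ⟨le_max_left _ _, max_le hab (min_le_left _ _)⟩⟩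

theorem myRetr_val {a b : ℝ} (hab : a ≤ b) (t : ℝ) (ht : t ∈ Set.Icc a b) :
    (myRetr a b hab t : ℝ) = t := by
  show max a (min b t) = t
  rw [min_eq_right ht.2, max_eq_right ht.1]

theorem myRetr_coe {a b : ℝ} (hab : a ≤ b) (u : Set.Icc a b) :
    myRetr a b hab (u : ℝ) = u :=
  Subtype.ext (myRetr_val hab _ u.2)

theorem myRetr_cont {a b : ℝ} (hab : a ≤ b) : Continuous (myRetr a b hab) :=
  Continuous.subtype_mk (continuous_const.max (continuous_const.min continuous_id)) _

/-- The `F`-level lemma on the compact interval. -/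
theorem myFLevel {a b : ℝ} (hab : a ≤ b) (F : Set.Icc a b → Set.Icc a b)
    (hF : Continuous F) (Qp x : Set.Icc a b) (hQ : F Qp = Qp)
    (z : ℕ → Set.Icc a b) (ns : ℕ → ℕ) (hn : ∀ i, 1 ≤ ns i)
    (hzx : ∀ i, F^[ns i] (z i) = x) (hz : Tendsto z atTop (nhds Qp)) :
    ∃ h : ℕ → Set.Icc a b, h 0 = x ∧ (∀ n, F (h (n + 1)) = h n) ∧
      ∃ φ : ℕ → ℕ, StrictMono φ ∧ Tendsto (fun i => h (φ i)) atTop (nhds Qp) := by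
  set G : ℝ → ℝ := fun t => (F (myRetr a b hab t) : ℝ) with hGdef
  have hGcont : Continuous G := continuous_subtype_val.comp (hF.comp (myRetr_cont hab))
  have hGcoe : ∀ u : Set.Icc a b, G (u : ℝ) = (F u : ℝ) := by
    intro u; show (F (myRetr a b hab (u : ℝ)) : ℝ) = _; rw [myRetr_coe hab]
  have hGiter : ∀ (m : ℕ) (u : Set.Icc a b), G^[m] (u : ℝ) = (F^[m] u : ℝ) := by
    intro m
    induction m with
    | zero => intro u; simp
    | succ m ih =>
        intro u
        rw [Function.iterate_succ_apply' G, ih u, hGcoe, Function.iterate_succ_apply' F]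
  obtain ⟨hG, hG0, hGbr, φ, hφ, hφlim⟩ := myRealLevel G hGcont (Qp : ℝ) (x : ℝ)
    (hGcoe Qp ▸ by rw [hQ]) (fun i => (z i : ℝ)) ns hn
    (fun i => by rw [hGiter, hzx i])
    ((continuous_subtype_val.tendsto Qp).comp hz)
  have hGmem : ∀ n, hG n ∈ Set.Icc a b := by
    intro n
    rw [← hGbr n]
    exact (F (myRetr a b hab (hG (n + 1)))).2
  have hval : ∀ n, ((myRetr a b hab (hG n) : Set.Icc a b) : ℝ) = hG n := fun n =>
    myRetr_val hab _ (hGmem n)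
  refine ⟨fun n => myRetr a b hab (hG n), ?_, ?_, φ, hφ, ?_⟩
  · show myRetr a b hab (hG 0) = x
    rw [hG0]; exact myRetr_coe hab x
  · intro n
    apply Subtype.ext
    have h1 : (F (myRetr a b hab (hG (n + 1))) : ℝ) = G (hG (n + 1)) := rfl
    rw [h1, hGbr n]
    exact (hval n).symm
  · have h2 : Tendsto (fun i => myRetr a b hab (hG (φ i))) atTop (nhds (myRetr a b hab (Qp : ℝ))) :=
      ((myRetr_cont hab).tendsto _).comp hφlim
    rwa [myRetr_coe hab] at h2
/-- Interpolation: an `f^[k]`-backward-branch yields an `f`-backward-branch. -/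
theorem myInterp {X : Type*} (f : X → X) (k : ℕ) (hk : 1 ≤ k) (hF : ℕ → X)
    (hb : ∀ nn, f^[k] (hF (nn + 1)) = hF nn) :
    ∃ h : ℕ → X, (∀ n, f (h (n + 1)) = h n) ∧ (∀ nn, h (k * nn) = hF nn) := by
  have hk0 : 0 < k := hk
  refine ⟨fun n => f^[k - n % k] (hF (n / k + 1)), ?_, ?_⟩
  · intro n
    have hj : n % k < k := Nat.mod_lt _ hk0
    rcases Nat.lt_or_ge (n % k + 1) k with hlt | hge
    · -- (n+1) % k = n % k + 1, (n+1)/k = n/k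
      have hmod : (n + 1) % k = n % k + 1 := by
        conv_lhs => rw [show n + 1 = k * (n / k) + (n % k + 1) by
          have := Nat.div_add_mod n k; omega]
        rw [Nat.mul_add_mod]
        exact Nat.mod_eq_of_lt hlt
      have hdiv : (n + 1) / k = n / k := by
        conv_lhs => rw [show n + 1 = k * (n / k) + (n % k + 1) by
          have := Nat.div_add_mod n k; omega]
        rw [Nat.mul_add_div hk0, Nat.div_eq_of_lt hlt]
        omega
      show f (f^[k - (n+1) % k] (hF ((n+1) / k + 1))) = f^[k - n % k] (hF (n / k + 1))
      rw [hmod, hdiv, ← Function.iterate_succ_apply' f]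
      congr 1
      omega
    · -- n % k = k - 1
      have hmod1 : n % k = k - 1 := by omega
      have hneq : n + 1 = k * (n / k + 1) := by
        have h5 : k * (n / k + 1) = k * (n / k) + k := by ring
        have := Nat.div_add_mod n k; omega
      have hmod : (n + 1) % k = 0 := by rw [hneq]; exact Nat.mul_mod_right _ _
      have hdiv : (n + 1) / k = n / k + 1 := by
        rw [hneq]; exact Nat.mul_div_cancel_left _ hk0
      show f (f^[k - (n+1) % k] (hF ((n+1) / k + 1))) = f^[k - n % k] (hF (n / k + 1))
      rw [hmod, hdiv, hmod1]
      have h1 : f^[k - 0] (hF (n / k + 1 + 1)) = hF (n / k + 1) := by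
        rw [Nat.sub_zero]; exact hb _
      rw [h1]
      have h2 : k - (k - 1) = 1 := by omega
      rw [h2, Function.iterate_one]
  · intro nn
    show f^[k - (k * nn) % k] (hF ((k * nn) / k + 1)) = hF nn
    rw [Nat.mul_mod_right, Nat.mul_div_cancel_left _ hk0, Nat.sub_zero]
    exact hb nn


end SAlphaAux

theorem periodic_orbit_meets_alpha_imp_sub_salpha {a b : ℝ} (hab : a ≤ b)
    (f : Set.Icc a b → Set.Icc a b) (hf : Continuous f)
    (p : Set.Icc a b) (k : ℕ) (hk : 1 ≤ k) (hp : f^[k] p = p)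
    (P : Set (Set.Icc a b)) (hP : P = Set.range fun n => f^[n] p)
    (x : Set.Icc a b) (hx : (alphaSet f x ∩ P).Nonempty) :
    P ⊆ sAlphaSet f x := by
  subst hP
  obtain ⟨q0, hq0α, hq0P⟩ := hx
  obtain ⟨n0, hn0⟩ := hq0P
  have hn0' : f^[n0] p = q0 := hn0
  have hk0 : 0 < k := hk
  have hfix : ∀ n : ℕ, f^[k] (f^[n] p) = f^[n] p := by
    intro n
    rw [← Function.iterate_add_apply, Nat.add_comm, Function.iterate_add_apply, hp]
  have hmulfix : ∀ m : ℕ, f^[k * m] p = p := by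
    intro m; rw [Function.iterate_mul]; exact Function.iterate_fixed hp m
  obtain ⟨gseq, hpre, φ0, hφ0, hφ0lim⟩ := hq0α
  -- pigeonhole on residues mod k
  have hpig : ∃ c, c < k ∧ ∃ᶠ i in atTop, φ0 i % k = c := by
    by_contra hcon
    push_neg at hcon
    have hall : ∀ c ∈ Finset.range k, ∀ᶠ i in atTop, ¬ (φ0 i % k = c) := by
      intro c hc
      have := hcon c (Finset.mem_range.1 hc)
      exact this
    have hcomb := (Filter.eventually_all_finset (Finset.range k)).2 hall
    obtain ⟨i, hi⟩ := hcomb.exists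
    exact hi (φ0 i % k) (Finset.mem_range.2 (Nat.mod_lt _ hk0)) rfl
  obtain ⟨c, hck, hcfreq⟩ := hpig
  obtain ⟨ψ, hψ, hψc⟩ := extraction_of_frequently_atTop hcfreq
  set θ : ℕ → ℕ := fun j => φ0 (ψ (j + k)) with hθdef
  have hθge : ∀ j, k ≤ θ j := by
    intro j
    have h1 : j + k ≤ ψ (j + k) := hψ.le_apply
    have h2 : ψ (j + k) ≤ φ0 (ψ (j + k)) := hφ0.le_apply
    show k ≤ φ0 (ψ (j + k))
    omega
  have hθc : ∀ j, θ j % k = c := fun j => hψc (j + k)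
  set Qp : Set.Icc a b := f^[c] q0 with hQpdef
  set z : ℕ → Set.Icc a b := fun j => f^[c] (gseq (θ j)) with hzdef
  set ms : ℕ → ℕ := fun j => θ j / k with hmsdef
  have hms1 : ∀ j, 1 ≤ ms j := fun j => (Nat.one_le_div_iff hk0).2 (hθge j)
  have hq0fix : f^[k] q0 = q0 := by rw [← hn0']; exact hfix n0
  have hQfix : f^[k] Qp = Qp := by
    show f^[k] (f^[c] q0) = f^[c] q0
    rw [← Function.iterate_add_apply, Nat.add_comm, Function.iterate_add_apply, hq0fix]
  have hzx : ∀ j, (f^[k])^[ms j] (z j) = x := by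
    intro j
    rw [← Function.iterate_mul]
    show f^[k * (θ j / k)] (f^[c] (gseq (θ j))) = x
    rw [← Function.iterate_add_apply]
    have harith : k * (θ j / k) + c = θ j := by
      have h1 := Nat.div_add_mod (θ j) k
      have h2 := hθc j
      omega
    rw [harith]
    exact hpre (θ j)
  have hzlim : Tendsto z atTop (nhds Qp) := by
    have h1 : Tendsto (fun j => gseq (φ0 (ψ (j + k)))) atTop (nhds q0) :=
      hφ0lim.comp (hψ.tendsto_atTop.comp (tendsto_add_atTop_nat k))
    exact ((hf.iterate c).tendsto q0).comp h1
  obtain ⟨hFb, hFb0, hFbbr, φ1, hφ1, hφ1lim⟩ :=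
    myFLevel hab (f^[k]) (hf.iterate k) Qp x hQfix z ms hms1 hzx hzlim
  obtain ⟨h, hbr, hkmul⟩ := myInterp f k hk hFb hFbbr
  have h0 : h 0 = x := by
    have := hkmul 0
    rw [Nat.mul_zero] at this
    rw [this, hFb0]
  have hQplim : Qp ∈ limitPts h := by
    refine ⟨fun i => k * φ1 i, fun i j hij => ?_, ?_⟩
    · exact mul_lt_mul_of_pos_left (hφ1 hij) hk0
    · exact hφ1lim.congr (fun i => (hkmul (φ1 i)).symm)
  have hQp' : Qp = f^[c + n0] p := by
    rw [Function.iterate_add_apply, hn0']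
  rintro r ⟨nr, hnr⟩
  have hnr' : f^[nr] p = r := hnr
  have hrj : ∃ j : ℕ, f^[j] Qp = r := by
    refine ⟨nr + (k - 1) * (c + n0), ?_⟩
    rw [hQp', ← Function.iterate_add_apply]
    have h6 : (k - 1) * (c + n0) + (c + n0) = (k - 1 + 1) * (c + n0) := by ring
    have harith : nr + (k - 1) * (c + n0) + (c + n0) = nr + k * (c + n0) := by
      rw [Nat.add_assoc, h6, show k - 1 + 1 = k by omega]
    rw [harith, Function.iterate_add_apply, hmulfix, hnr']
  obtain ⟨j, hj⟩ := hrj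
  exact ⟨h, h0, hbr, hj ▸ myLimitShift f hf h hbr Qp hQplim j⟩
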